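/- Under Assumption 1, assume κ > 0 and β < 1, where κ is the conical margin parameter of W and β = max entry of H̄. Let I be a set of basis indices of V and p = diag(X_opt) for an optimal solution X_opt of P(A,r). Then p(i) ≥ 1 − 8ε/(κ(1−β)(1−ε)) for every i ∈ I. -/

import Mathlib

noncomputable section
open Matrix
open scoped Classical

/-- Entrywise L1 norm of a vector. -/
def l1 {α : Type*} [Fintype α] (v : α → ℝ) : ℝ := ∑ i, |v i|

/-- Induced L1 norm of a matrix (maximum column sum of absolute values). -/
def ml1 {α β : Type*} [Fintype α] [Fintype β] (M : Matrix α β ℝ) : ℝ :=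
  sSup (Set.range fun j => ∑ i, |M i j|)

/-- Feasible set of problem P(A,r). -/
def Feas {ι : Type*} [Fintype ι] [DecidableEq ι] (X : Matrix ι ι ℝ) (r : ℕ) : Prop :=
  Matrix.trace X = (r : ℝ) ∧ (∀ i, X i i ≤ 1) ∧ (∀ i j, 0 ≤ X i j) ∧
    (∀ i j, X i j ≤ X i i)

/-- κ(W) = min over j of min over nonnegative z (supported off j) of
    ‖w_j − W(:,R∖{j}) z‖₁. -/
def kappa {d r : ℕ} (W : Matrix (Fin d) (Fin r) ℝ) : ℝ :=
  sInf {c | ∃ (j : Fin r) (z : Fin r → ℝ), (∀ k, 0 ≤ z k) ∧ z j = 0 ∧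
    c = l1 (fun i => W i j - ∑ k, W i k * z k)}

/-- ω(W) = min over distinct pairs of ‖w_{j₁} − w_{j₂}‖₁. -/
def omegaW {d r : ℕ} (W : Matrix (Fin d) (Fin r) ℝ) : ℝ :=
  sInf {c | ∃ j₁ j₂ : Fin r, j₁ ≠ j₂ ∧ c = l1 (fun i => W i j₁ - W i j₂)}

/-- β = maximum entry of H̄. -/
def betaH {r m : ℕ} (Hb : Matrix (Fin r) (Fin m) ℝ) : ℝ :=
  sSup (Set.range fun p : Fin r × Fin m => Hb p.1 p.2)


lemma l1_nonneg {α : Type*} [Fintype α] (v : α → ℝ) : 0 ≤ l1 v :=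
  Finset.sum_nonneg fun _ _ => abs_nonneg _

lemma col_le_ml1 {α β : Type*} [Fintype α] [Fintype β] (M : Matrix α β ℝ) (j : β) :
    ∑ i, |M i j| ≤ ml1 M :=
  le_csSup (Set.finite_range _).bddAbove ⟨j, rfl⟩

lemma ml1_le {α β : Type*} [Fintype α] [Fintype β] [Nonempty β] (M : Matrix α β ℝ) (c : ℝ)
    (h : ∀ j, ∑ i, |M i j| ≤ c) : ml1 M ≤ c :=
  csSup_le (Set.range_nonempty _) (by rintro _ ⟨j, rfl⟩; exact h j)

lemma final_algebra (κ β ε X S t : ℝ) (hκ : 0 < κ) (hκ1 : κ ≤ 1) (hβ0 : 0 ≤ β) (hβ1 : β ≤ 1)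
    (hε0 : 0 ≤ ε) (hε1 : ε < 1) (hSb : (1 - ε) * S ≤ 1 + 3 * ε)
    (hty : κ * (1 - t) ≤ 3 * ε + ε * S) (htX : t ≤ X + β * (S - X)) :
    (1 - X) * (κ * (1 - β) * (1 - ε)) ≤ 8 * ε := by
  have hκβ : κ * β ≤ 1 := by nlinarith [mul_le_mul_of_nonneg_right hκ1 hβ0]
  have h1 : κ * t ≤ κ * (X + β * (S - X)) := mul_le_mul_of_nonneg_left htX hκ.le
  have h2 : κ - κ * X - κ * β * S + κ * β * X ≤ 3 * ε + ε * S := by nlinarith [hty, h1]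
  have h3 := mul_le_mul_of_nonneg_right h2 (by linarith : (0:ℝ) ≤ 1 - ε)
  have h4 := mul_le_mul_of_nonneg_left hSb hε0
  have h5 := mul_le_mul_of_nonneg_left hSb (mul_nonneg hκ.le hβ0)
  have h6 : 0 ≤ ε * (1 - κ * β) := mul_nonneg hε0 (by linarith)
  nlinarith [h3, h4, h5, h6]

/-- Diagonal entries of X_opt at basis indices are at least 1 − 8ε/(κ(1−β)(1−ε)). -/
theorem basis_diagonal_bound
    {d r m : ℕ} (W : Matrix (Fin d) (Fin r) ℝ) (Hbar : Matrix (Fin r) (Fin m) ℝ)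
    (σ : Equiv.Perm (Fin r ⊕ Fin m))
    (N A V : Matrix (Fin d) (Fin r ⊕ Fin m) ℝ)
    (H : Matrix (Fin r) (Fin r ⊕ Fin m) ℝ) (ε : ℝ)
    (hW : ∀ i j, 0 ≤ W i j) (hHbar : ∀ i j, 0 ≤ Hbar i j)
    (hH : H = fun j u => Matrix.fromCols (1 : Matrix (Fin r) (Fin r) ℝ) Hbar j (σ u))
    (hV : V = W * H) (hA : A = V + N)
    (hVcol : ∀ u, l1 (fun i => V i u) = 1)
    (hWcol : ∀ j, l1 (fun i => W i j) = 1)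
    (hHcol : ∀ u, l1 (fun j => H j u) = 1)
    (hε0 : 0 ≤ ε) (hε1 : ε < 1) (hN : ml1 N ≤ ε)
    (Xopt : Matrix (Fin r ⊕ Fin m) (Fin r ⊕ Fin m) ℝ)
    (hfeas : Feas Xopt r)
    (hopt : ∀ X : Matrix (Fin r ⊕ Fin m) (Fin r ⊕ Fin m) ℝ,
      Feas X r → ml1 (A - A * Xopt) ≤ ml1 (A - A * X))
    (hκ : 0 < kappa W) (hβ : betaH Hbar < 1) :
    ∀ j : Fin r,
      1 - 8 * ε / (kappa W * (1 - betaH Hbar) * (1 - ε)) ≤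
        Xopt (σ.symm (Sum.inl j)) (σ.symm (Sum.inl j)) := by
  intro j
  have hne : Nonempty (Fin r ⊕ Fin m) := ⟨Sum.inl j⟩
  have hε1' : (0:ℝ) < 1 - ε := by linarith
  -- reindexing helper
  have hreidx : ∀ F : (Fin r ⊕ Fin m) → ℝ,
      ∑ u, F u = (∑ j' : Fin r, F (σ.symm (Sum.inl j'))) + ∑ k : Fin m, F (σ.symm (Sum.inr k)) := by
    intro F
    rw [← Equiv.sum_comp σ.symm F, Fintype.sum_sum_type]
  -- H entry facts
  have hHval : ∀ (k : Fin r) (u : Fin r ⊕ Fin m),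
      H k u = Sum.elim (fun j' => if k = j' then (1:ℝ) else 0) (fun k' => Hbar k k') (σ u) := by
    intro k u
    rw [hH]
    cases h : σ u with
    | inl j' => simp [h, Matrix.one_apply]
    | inr k' => simp [h]
  have hHnn : ∀ k u, 0 ≤ H k u := by
    intro k u
    rw [hHval]
    cases σ u with
    | inl j' => dsimp; split <;> norm_num
    | inr k' => exact hHbar _ _
  have hHsum : ∀ u, ∑ k, H k u = 1 := by
    intro u
    have := hHcol u
    rw [l1] at this
    rw [← this]
    exact Finset.sum_congr rfl fun k _ => (abs_of_nonneg (hHnn k u)).symm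
  have hH1 : ∀ k u, H k u ≤ 1 := by
    intro k u
    rw [← hHsum u]
    exact Finset.single_le_sum (fun k' _ => hHnn k' u) (Finset.mem_univ k)
  -- V facts
  have hVapp : ∀ i u, V i u = ∑ k, W i k * H k u := by
    intro i u; rw [hV, Matrix.mul_apply]
  have hVnn : ∀ i u, 0 ≤ V i u := by
    intro i u; rw [hVapp]
    exact Finset.sum_nonneg fun k _ => mul_nonneg (hW i k) (hHnn k u)
  have hVsum : ∀ u, ∑ i, V i u = 1 := by
    intro u
    have := hVcol u
    rw [l1] at this
    rw [← this]
    exact Finset.sum_congr rfl fun i _ => (abs_of_nonneg (hVnn i u)).symm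
  have hVbasis : ∀ i (j' : Fin r), V i (σ.symm (Sum.inl j')) = W i j' := by
    intro i j'
    rw [hVapp]
    have : ∀ k, H k (σ.symm (Sum.inl j')) = if k = j' then (1:ℝ) else 0 := by
      intro k; rw [hHval]; simp
    simp only [this, mul_ite, mul_one, mul_zero]
    simp
  have hNcol : ∀ u, ∑ i, |N i u| ≤ ε := fun u => (col_le_ml1 N u).trans hN
  have hAapp : ∀ i u, A i u = V i u + N i u := by
    intro i u; rw [hA]; rfl
  -- κ and β bounds
  have hbddS : BddBelow {c | ∃ (j : Fin r) (z : Fin r → ℝ), (∀ k, 0 ≤ z k) ∧ z j = 0 ∧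
      c = l1 (fun i => W i j - ∑ k, W i k * z k)} := by
    refine ⟨0, ?_⟩
    rintro c ⟨j', z, _, _, rfl⟩
    exact l1_nonneg _
  have hκle1 : kappa W ≤ 1 := by
    have hmem : (1:ℝ) ∈ {c | ∃ (j : Fin r) (z : Fin r → ℝ), (∀ k, 0 ≤ z k) ∧ z j = 0 ∧
        c = l1 (fun i => W i j - ∑ k, W i k * z k)} := by
      refine ⟨j, 0, fun k => le_refl 0, rfl, ?_⟩
      rw [← hWcol j]
      congr 1
      funext i
      simp
    exact csInf_le hbddS hmem
  have hβle : ∀ p q, Hbar p q ≤ betaH Hbar :=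
    fun p q => le_csSup (Set.finite_range _).bddAbove ⟨(p, q), rfl⟩
  have hβ0 : 0 ≤ betaH Hbar := by
    rcases isEmpty_or_nonempty (Fin m) with hm | hm
    · have : (Set.range fun p : Fin r × Fin m => Hbar p.1 p.2) = ∅ := by
        rw [Set.range_eq_empty_iff]
        exact ⟨fun p => hm.false p.2⟩
      rw [betaH, this, Real.sSup_empty]
    · obtain ⟨k⟩ := hm
      exact (hHbar j k).trans (hβle j k)
  -- the ideal feasible solution X0
  set X0 : Matrix (Fin r ⊕ Fin m) (Fin r ⊕ Fin m) ℝ :=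
    fun u u' => Sum.elim (fun j' => H j' u') (fun _ => (0:ℝ)) (σ u) with hX0
  have hX0basis : ∀ (j' : Fin r) u', X0 (σ.symm (Sum.inl j')) u' = H j' u' := by
    intro j' u'; rw [hX0]; simp
  have hX0nonbasis : ∀ (k : Fin m) u', X0 (σ.symm (Sum.inr k)) u' = 0 := by
    intro k u'; rw [hX0]; simp
  have hX0diag1 : ∀ (j' : Fin r), X0 (σ.symm (Sum.inl j')) (σ.symm (Sum.inl j')) = 1 := by
    intro j'
    rw [hX0basis, hHval]
    simp
  have hX0colsum : ∀ u', ∑ u, X0 u u' = 1 := by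
    intro u'
    rw [hreidx (fun u => X0 u u')]
    simp only [hX0basis, hX0nonbasis]
    simp [hHsum u']
  have hfeas0 : Feas X0 r := by
    refine ⟨?_, ?_, ?_, ?_⟩
    · show ∑ u, X0 u u = (r : ℝ)
      rw [hreidx (fun u => X0 u u)]
      simp only [hX0diag1]
      simp only [hX0nonbasis]
      simp
    · intro u
      have hx : X0 u u = Sum.elim (fun j' => H j' u) (fun _ => (0:ℝ)) (σ u) := rfl
      rw [hx]
      cases h : σ u with
      | inl j' => exact hH1 j' u
      | inr k' => exact zero_le_one
    · intro u u'
      have hx : X0 u u' = Sum.elim (fun j' => H j' u') (fun _ => (0:ℝ)) (σ u) := rfl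
      rw [hx]
      cases h : σ u with
      | inl j' => exact hHnn j' u'
      | inr k' => exact le_rfl
    · intro u u'
      have hu : u = σ.symm (σ u) := (Equiv.symm_apply_apply σ u).symm
      cases h : σ u with
      | inl j' =>
        rw [hu, h, hX0basis, hX0basis]
        have h2 : H j' (σ.symm (Sum.inl j')) = 1 := by
          rw [hHval]; simp
        rw [h2]; exact hH1 j' u'
      | inr k' =>
        rw [hu, h, hX0nonbasis, hX0nonbasis]
  -- Xopt has residual at most 2ε
  have hNXbound : ∀ (X : Matrix (Fin r ⊕ Fin m) (Fin r ⊕ Fin m) ℝ), (∀ u u', 0 ≤ X u u') →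
      ∀ u', ∑ i, |∑ u, N i u * X u u'| ≤ ε * ∑ u, X u u' := by
    intro X hXnn u'
    calc ∑ i, |∑ u, N i u * X u u'| ≤ ∑ i, ∑ u, |N i u| * X u u' := by
          refine Finset.sum_le_sum fun i _ => ?_
          refine (Finset.abs_sum_le_sum_abs _ _).trans ?_
          refine Finset.sum_le_sum fun u _ => ?_
          rw [abs_mul, abs_of_nonneg (hXnn u u')]
      _ = ∑ u, (∑ i, |N i u|) * X u u' := by
          rw [Finset.sum_comm]
          exact Finset.sum_congr rfl fun u _ => (Finset.sum_mul _ _ _).symm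
      _ ≤ ∑ u, ε * X u u' := Finset.sum_le_sum fun u _ =>
          mul_le_mul_of_nonneg_right (hNcol u) (hXnn u u')
      _ = ε * ∑ u, X u u' := (Finset.mul_sum _ _ _).symm
  have hVX0 : ∀ i u', (∑ u, V i u * X0 u u') = V i u' := by
    intro i u'
    rw [hreidx (fun u => V i u * X0 u u')]
    simp only [hX0basis, hX0nonbasis, mul_zero, Finset.sum_const_zero, add_zero, hVbasis]
    exact (hVapp i u').symm
  have hres0 : ml1 (A - A * X0) ≤ 2 * ε := by
    refine ml1_le _ _ fun u' => ?_
    have hterm : ∀ i, (A - A * X0) i u' = N i u' - ∑ u, N i u * X0 u u' := by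
      intro i
      rw [Matrix.sub_apply, Matrix.mul_apply]
      simp only [hAapp]
      rw [show ∑ u, (V i u + N i u) * X0 u u' = (∑ u, V i u * X0 u u') + ∑ u, N i u * X0 u u' by
        rw [← Finset.sum_add_distrib]; exact Finset.sum_congr rfl fun u _ => add_mul _ _ _]
      rw [hVX0]
      ring
    calc ∑ i, |(A - A * X0) i u'| ≤ ∑ i, (|N i u'| + |∑ u, N i u * X0 u u'|) := by
          refine Finset.sum_le_sum fun i _ => ?_
          rw [hterm i]
          exact abs_sub _ _
      _ = (∑ i, |N i u'|) + ∑ i, |∑ u, N i u * X0 u u'| := Finset.sum_add_distrib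
      _ ≤ ε + ε * ∑ u, X0 u u' := by
          refine add_le_add (hNcol u') (hNXbound X0 ?_ u')
          intro u u''
          have hx : X0 u u'' = Sum.elim (fun j' => H j' u'') (fun _ => (0:ℝ)) (σ u) := rfl
          rw [hx]
          cases h : σ u with
          | inl j' => exact hHnn j' u''
          | inr k' => exact le_rfl
      _ = ε + ε * 1 := by rw [hX0colsum]
      _ = 2 * ε := by ring
  have hml1opt : ml1 (A - A * Xopt) ≤ 2 * ε := (hopt X0 hfeas0).trans hres0
  have hrescol : ∀ u', ∑ i, |A i u' - ∑ u, A i u * Xopt u u'| ≤ 2 * ε := by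
    intro u'
    have := (col_le_ml1 (A - A * Xopt) u').trans hml1opt
    simpa [Matrix.sub_apply, Matrix.mul_apply] using this
  -- basic facts about the optimal solution
  obtain ⟨-, -, hXnn, -⟩ := hfeas
  set i0 := σ.symm (Sum.inl j) with hi0def
  have hσi0 : σ i0 = Sum.inl j := σ.apply_symm_apply _
  set S := ∑ u, Xopt u i0 with hSdef
  have hS0 : (0:ℝ) ≤ S := Finset.sum_nonneg fun u _ => hXnn u i0
  have hA_col : ∀ u', ∑ i, |A i u'| ≤ 1 + ε := by
    intro u'
    calc ∑ i, |A i u'| ≤ ∑ i, (V i u' + |N i u'|) := by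
          refine Finset.sum_le_sum fun i _ => ?_
          rw [hAapp]
          calc |V i u' + N i u'| ≤ |V i u'| + |N i u'| := abs_add_le _ _
            _ = V i u' + |N i u'| := by rw [abs_of_nonneg (hVnn i u')]
      _ = (∑ i, V i u') + ∑ i, |N i u'| := Finset.sum_add_distrib
      _ ≤ 1 + ε := by rw [hVsum]; exact add_le_add le_rfl (hNcol u')
  have hup : ∑ i, |∑ u, A i u * Xopt u i0| ≤ 1 + 3*ε := by
    calc ∑ i, |∑ u, A i u * Xopt u i0|
        ≤ ∑ i, (|A i i0| + |A i i0 - ∑ u, A i u * Xopt u i0|) := by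
          refine Finset.sum_le_sum fun i _ => ?_
          calc |∑ u, A i u * Xopt u i0|
              = |A i i0 - (A i i0 - ∑ u, A i u * Xopt u i0)| := by rw [sub_sub_cancel]
            _ ≤ |A i i0| + |A i i0 - ∑ u, A i u * Xopt u i0| := abs_sub _ _
      _ = (∑ i, |A i i0|) + ∑ i, |A i i0 - ∑ u, A i u * Xopt u i0| := Finset.sum_add_distrib
      _ ≤ (1 + ε) + 2*ε := add_le_add (hA_col i0) (hrescol i0)
      _ = 1 + 3*ε := by ring
  have hVXS : ∑ i, ∑ u, V i u * Xopt u i0 = S := by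
    rw [Finset.sum_comm]
    calc ∑ u, ∑ i, V i u * Xopt u i0 = ∑ u, (∑ i, V i u) * Xopt u i0 :=
          Finset.sum_congr rfl fun u _ => (Finset.sum_mul _ _ _).symm
      _ = S := by rw [hSdef]; exact Finset.sum_congr rfl fun u _ => by rw [hVsum, one_mul]
  have hAsplit : ∀ i u', ∑ u, A i u * Xopt u u' =
      (∑ u, V i u * Xopt u u') + ∑ u, N i u * Xopt u u' := by
    intro i u'
    rw [← Finset.sum_add_distrib]
    exact Finset.sum_congr rfl fun u _ => by rw [hAapp]; ring
  have hlow : (1 - ε) * S ≤ ∑ i, |∑ u, A i u * Xopt u i0| := by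
    have h1 : ∀ i, (∑ u, V i u * Xopt u i0) - |∑ u, N i u * Xopt u i0| ≤
        |∑ u, A i u * Xopt u i0| := by
      intro i
      have hVnn' : 0 ≤ ∑ u, V i u * Xopt u i0 :=
        Finset.sum_nonneg fun u _ => mul_nonneg (hVnn i u) (hXnn u i0)
      rw [hAsplit]
      have key := abs_add_le ((∑ u, V i u * Xopt u i0) + ∑ u, N i u * Xopt u i0)
        (-(∑ u, N i u * Xopt u i0))
      simp only [add_neg_cancel_right, abs_neg] at key
      rw [abs_of_nonneg hVnn'] at key
      linarith
    have h2 : ∑ i, |∑ u, N i u * Xopt u i0| ≤ ε * S := hNXbound Xopt hXnn i0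
    calc (1 - ε) * S = S - ε * S := by ring
      _ ≤ (∑ i, ∑ u, V i u * Xopt u i0) - ∑ i, |∑ u, N i u * Xopt u i0| := by
          rw [hVXS]; linarith
      _ = ∑ i, ((∑ u, V i u * Xopt u i0) - |∑ u, N i u * Xopt u i0|) :=
          by rw [Finset.sum_sub_distrib]
      _ ≤ ∑ i, |∑ u, A i u * Xopt u i0| := Finset.sum_le_sum fun i _ => h1 i
  have hSb : (1 - ε) * S ≤ 1 + 3*ε := hlow.trans hup
  -- the combination vector y
  set y : Fin r → ℝ := fun k => ∑ u, H k u * Xopt u i0 with hydef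
  have hynn : ∀ k, 0 ≤ y k := fun k =>
    Finset.sum_nonneg fun u _ => mul_nonneg (hHnn k u) (hXnn u i0)
  have hWy : ∀ i, ∑ u, V i u * Xopt u i0 = ∑ k, W i k * y k := by
    intro i
    calc ∑ u, V i u * Xopt u i0 = ∑ u, ∑ k, W i k * H k u * Xopt u i0 := by
          refine Finset.sum_congr rfl fun u _ => ?_
          rw [hVapp, Finset.sum_mul]
      _ = ∑ k, ∑ u, W i k * H k u * Xopt u i0 := Finset.sum_comm
      _ = ∑ k, W i k * y k := by
          refine Finset.sum_congr rfl fun k _ => ?_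
          rw [hydef]
          rw [Finset.mul_sum]
          exact Finset.sum_congr rfl fun u _ => by ring
  have hwj : ∑ i, |W i j - ∑ k, W i k * y k| ≤ 3*ε + ε*S := by
    have hterm : ∀ i, W i j - ∑ k, W i k * y k =
        (A i i0 - ∑ u, A i u * Xopt u i0) - N i i0 + ∑ u, N i u * Xopt u i0 := by
      intro i
      rw [← hWy i, hAsplit, hAapp i i0, (hVbasis i j : V i i0 = W i j)]
      ring
    calc ∑ i, |W i j - ∑ k, W i k * y k|
        = ∑ i, |(A i i0 - ∑ u, A i u * Xopt u i0) - N i i0 + ∑ u, N i u * Xopt u i0| :=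
          Finset.sum_congr rfl fun i _ => by rw [hterm i]
      _ ≤ ∑ i, (|A i i0 - ∑ u, A i u * Xopt u i0| + |N i i0| + |∑ u, N i u * Xopt u i0|) := by
          refine Finset.sum_le_sum fun i _ => ?_
          refine (abs_add_le _ _).trans (add_le_add (abs_sub _ _) le_rfl)
      _ = ((∑ i, |A i i0 - ∑ u, A i u * Xopt u i0|) + ∑ i, |N i i0|)
            + ∑ i, |∑ u, N i u * Xopt u i0| := by
          rw [← Finset.sum_add_distrib, ← Finset.sum_add_distrib]
      _ ≤ (2*ε + ε) + ε*S :=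
          add_le_add (add_le_add (hrescol i0) (hNcol i0)) (hNXbound Xopt hXnn i0)
      _ = 3*ε + ε*S := by ring
  set t := y j with htdef
  have ht0 : 0 ≤ t := hynn j
  -- κ-based lower bound on t
  have hty : kappa W * (1 - t) ≤ 3*ε + ε*S := by
    rcases le_or_gt 1 t with h | h
    · have h0 : 0 ≤ 3*ε + ε*S := by
        have := mul_nonneg hε0 hS0
        linarith
      nlinarith [mul_nonneg hκ.le (sub_nonneg.mpr h)]
    · have h1t : 0 < 1 - t := by linarith
      set z : Fin r → ℝ := fun k => if k = j then 0 else y k / (1 - t) with hzdef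
      have hzj : z j = 0 := by rw [hzdef]; simp
      have hznn : ∀ k, 0 ≤ z k := by
        intro k
        rw [hzdef]
        dsimp only
        split
        · exact le_rfl
        · exact div_nonneg (hynn k) h1t.le
      have hκle : kappa W ≤ l1 (fun i => W i j - ∑ k, W i k * z k) :=
        csInf_le hbddS ⟨j, z, hznn, hzj, rfl⟩
      have hcompute : ∀ i, W i j - ∑ k, W i k * z k = (W i j - ∑ k, W i k * y k) / (1 - t) := by
        intro i
        have e1 : ∑ k, W i k * z k = ∑ k ∈ Finset.univ.erase j, W i k * (y k / (1 - t)) := by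
          rw [← Finset.add_sum_erase _ (fun k => W i k * z k) (Finset.mem_univ j)]
          rw [hzj, mul_zero, zero_add]
          refine Finset.sum_congr rfl fun k hk => ?_
          have hkj : k ≠ j := (Finset.mem_erase.mp hk).1
          rw [hzdef]
          simp [hkj]
        have e2 : ∑ k, W i k * y k = W i j * t + ∑ k ∈ Finset.univ.erase j, W i k * y k := by
          rw [← Finset.add_sum_erase _ (fun k => W i k * y k) (Finset.mem_univ j), htdef]
        have e3 : ∑ k ∈ Finset.univ.erase j, W i k * (y k / (1 - t)) =
            (∑ k ∈ Finset.univ.erase j, W i k * y k) / (1 - t) := by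
          rw [Finset.sum_div]
          exact Finset.sum_congr rfl fun k _ => by ring
        rw [e1, e3, e2]
        field_simp
        ring
      have heq : l1 (fun i => W i j - ∑ k, W i k * z k) =
          (∑ i, |W i j - ∑ k, W i k * y k|) / (1 - t) := by
        rw [l1, Finset.sum_div]
        refine Finset.sum_congr rfl fun i _ => ?_
        rw [hcompute i, abs_div, abs_of_pos h1t]
      rw [heq, le_div_iff₀ h1t] at hκle
      exact hκle.trans hwj
  -- relating t to the diagonal entry
  have hHji0 : H j i0 = 1 := by
    rw [hHval, hσi0]
    simp
  have htX : t ≤ Xopt i0 i0 + betaH Hbar * (S - Xopt i0 i0) := by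
    have e1 : t = H j i0 * Xopt i0 i0 + ∑ u ∈ Finset.univ.erase i0, H j u * Xopt u i0 := by
      rw [htdef, hydef]
      exact (Finset.add_sum_erase _ (fun u => H j u * Xopt u i0) (Finset.mem_univ i0)).symm
    have e2 : ∑ u ∈ Finset.univ.erase i0, H j u * Xopt u i0 ≤
        betaH Hbar * (S - Xopt i0 i0) := by
      have e3 : ∑ u ∈ Finset.univ.erase i0, H j u * Xopt u i0 ≤
          ∑ u ∈ Finset.univ.erase i0, betaH Hbar * Xopt u i0 := by
        refine Finset.sum_le_sum fun u hu => ?_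
        have hune : u ≠ i0 := (Finset.mem_erase.mp hu).1
        refine mul_le_mul_of_nonneg_right ?_ (hXnn u i0)
        rw [hHval]
        cases hsu : σ u with
        | inl j' =>
          have hj' : j ≠ j' := by
            intro hc
            apply hune
            have := congrArg σ.symm hsu
            rw [Equiv.symm_apply_apply] at this
            rw [this, ← hc]
          simp only [Sum.elim_inl, if_neg hj']
          exact hβ0
        | inr k' => exact hβle j k'
      have e4 : ∑ u ∈ Finset.univ.erase i0, Xopt u i0 = S - Xopt i0 i0 := by
        rw [hSdef, ← Finset.add_sum_erase _ (fun u => Xopt u i0) (Finset.mem_univ i0)]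
        ring
      calc ∑ u ∈ Finset.univ.erase i0, H j u * Xopt u i0
          ≤ ∑ u ∈ Finset.univ.erase i0, betaH Hbar * Xopt u i0 := e3
        _ = betaH Hbar * ∑ u ∈ Finset.univ.erase i0, Xopt u i0 := (Finset.mul_sum _ _ _).symm
        _ = betaH Hbar * (S - Xopt i0 i0) := by rw [e4]
    rw [e1, hHji0, one_mul]
    linarith
  -- final algebra
  have hP : 0 < kappa W * (1 - betaH Hbar) * (1 - ε) :=
    mul_pos (mul_pos hκ (by linarith)) hε1'
  have hgoal : (1 - Xopt i0 i0) * (kappa W * (1 - betaH Hbar) * (1 - ε)) ≤ 8 * ε :=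
    final_algebra (kappa W) (betaH Hbar) ε (Xopt i0 i0) S t hκ hκle1 hβ0 hβ.le hε0 hε1 hSb hty htX
  have hfin : 1 - Xopt i0 i0 ≤ 8 * ε / (kappa W * (1 - betaH Hbar) * (1 - ε)) :=
    (le_div_iff₀ hP).mpr hgoal
  linarith
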